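/- arXiv:2510.19323 — 3 statements merged into one kernel-verified Lean document; each statement's English description precedes it below -/
import Mathlib

section
/- Let H be a real Hilbert space, let κ > 0, and let α : H → ℝ be a continuous linear functional with operator norm ‖α‖ < √(2κ). Define F : H → ℝ by F(v) = √(2κ)·‖v‖ − α(v). Then F is strongly convex in the Finsler sense: for every v ∈ H with v ≠ 0 and every u ∈ H with u ≠ 0, the real function t ↦ ½·F(v + t·u)² is twice differentiable at t = 0 and its second derivative at t = 0 is strictly positive. -/
open Real
open scoped InnerProductSpace

/-- strong convexity of the Randers-type Finsler norm
`F v = √(2κ)‖v‖ − α v` with `‖α‖ < √(2κ)`: for `v ≠ 0`, `u ≠ 0` the map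
`t ↦ ½ F(v + t u)²` is twice differentiable at `0` with strictly positive
second derivative there. -/
theorem stmt_2 {H : Type*} [NormedAddCommGroup H] [InnerProductSpace ℝ H] [CompleteSpace H]
    (κ : ℝ) (hκ : 0 < κ) (α : H →L[ℝ] ℝ) (hα : ‖α‖ < Real.sqrt (2 * κ))
    (F : H → ℝ) (hF : ∀ v, F v = Real.sqrt (2 * κ) * ‖v‖ - α v)
    (v u : H) (hv : v ≠ 0) (hu : u ≠ 0) :
    ∃ f' : ℝ → ℝ,
      (∀ᶠ t in nhds (0 : ℝ),
        HasDerivAt (fun s : ℝ => (1 / 2) * (F (v + s • u)) ^ 2) (f' t) t) ∧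
      ∃ c : ℝ, HasDerivAt f' c 0 ∧ 0 < c := by
  classical
  set c := Real.sqrt (2 * κ) with hcdef
  have hc0 : 0 < c := Real.sqrt_pos.mpr (by linarith)
  have hv0 : (0:ℝ) < ‖v‖ := norm_pos_iff.mpr hv
  have hu0 : (0:ℝ) < ‖u‖ := norm_pos_iff.mpr hu
  set I : ℝ := ⟪v, u⟫_ℝ with hIdef
  set U : ℝ := ‖u‖ ^ 2 with hUdef
  set q : ℝ → ℝ := fun t => ‖v‖ ^ 2 + 2 * t * I + t ^ 2 * U with hqdef
  have hqeq : ∀ t : ℝ, q t = ‖v + t • u‖ ^ 2 := by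
    intro t
    have := @norm_add_sq_real H _ _ v (t • u)
    simp only [real_inner_smul_right, norm_smul, Real.norm_eq_abs] at this
    simp only [hqdef, this, hUdef, hIdef]
    rw [mul_pow, sq_abs]
    ring
  have hqnn : ∀ t : ℝ, 0 ≤ q t := fun t => (hqeq t).symm ▸ sq_nonneg _
  have hsqrtq : ∀ t : ℝ, Real.sqrt (q t) = ‖v + t • u‖ := by
    intro t
    rw [hqeq t, Real.sqrt_sq (norm_nonneg _)]
  have hq0 : q 0 = ‖v‖ ^ 2 := by simp [hqdef]
  have hsq0 : Real.sqrt (q 0) = ‖v‖ := by rw [hq0, Real.sqrt_sq (norm_nonneg _)]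
  -- key rewriting of F
  have hFeq : ∀ s : ℝ, F (v + s • u) = c * Real.sqrt (q s) - (α v + s * α u) := by
    intro s
    rw [hF, hsqrtq]
    simp [mul_comm]
  -- derivative of q
  have hq' : ∀ t : ℝ, HasDerivAt q (2 * I + 2 * t * U) t := by
    intro t
    have h := (((hasDerivAt_id t).const_mul (2 * I)).add
      ((hasDerivAt_pow 2 t).const_mul U)).const_add (‖v‖ ^ 2)
    have heq : q = fun x : ℝ => ‖v‖ ^ 2 + (2 * I * x + U * x ^ 2) := by
      funext x; simp only [hqdef]; ring
    rw [heq]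
    refine h.congr_deriv ?_
    push_cast
    ring
  set A : ℝ → ℝ := fun t => c * Real.sqrt (q t) - (α v + t * α u) with hAdef
  set B : ℝ → ℝ := fun t => c * (I + t * U) / Real.sqrt (q t) - α u with hBdef
  refine ⟨fun t => A t * B t, ?_, ?_⟩
  · -- eventual first derivative
    have hopen : {t : ℝ | 0 < q t} ∈ nhds (0:ℝ) := by
      have hc : Continuous q := by fun_prop
      have : IsOpen {t : ℝ | 0 < q t} := isOpen_lt continuous_const hc
      exact this.mem_nhds (by simp [hq0]; positivity)
    filter_upwards [hopen] with t ht
    have hsqt : (0:ℝ) < Real.sqrt (q t) := Real.sqrt_pos.mpr ht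
    have hsq : HasDerivAt (fun s => Real.sqrt (q s))
        (1 / (2 * Real.sqrt (q t)) * (2 * I + 2 * t * U)) t :=
      (Real.hasDerivAt_sqrt ht.ne').comp t (hq' t)
    have hA : HasDerivAt A (B t) t := by
      have h1 : HasDerivAt (fun s : ℝ => c * Real.sqrt (q s))
          (c * (1 / (2 * Real.sqrt (q t)) * (2 * I + 2 * t * U))) t := hsq.const_mul c
      have h2 : HasDerivAt (fun s : ℝ => α v + s * α u) (α u) t := by
        simpa using ((hasDerivAt_id t).mul_const (α u)).const_add (α v)
      have := h1.sub h2
      refine this.congr_deriv ?_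
      simp only [hBdef]
      field_simp
    have hfun : HasDerivAt (fun s : ℝ => (1/2) * A s ^ 2) (A t * B t) t := by
      have := ((hA.pow 2).const_mul (1/2 : ℝ))
      refine this.congr_deriv ?_
      ring
    refine HasDerivAt.congr_of_eventuallyEq hfun ?_
    filter_upwards with s
    rw [hFeq s]
  · -- second derivative at 0
    have hq00 : q 0 ≠ 0 := by rw [hq0]; positivity
    have hsq : HasDerivAt (fun s => Real.sqrt (q s))
        (1 / (2 * Real.sqrt (q 0)) * (2 * I + 2 * 0 * U)) 0 :=
      (Real.hasDerivAt_sqrt hq00).comp 0 (hq' 0)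
    have hsq' : HasDerivAt (fun s => Real.sqrt (q s)) (I / ‖v‖) 0 := by
      convert hsq using 1
      rw [hsq0]
      field_simp
      ring
    have hA : HasDerivAt A (B 0) 0 := by
      have h2 : HasDerivAt (fun s : ℝ => α v + s * α u) (α u) 0 := by
        simpa using ((hasDerivAt_id (0:ℝ)).mul_const (α u)).const_add (α v)
      have := (hsq'.const_mul c).sub h2
      refine this.congr_deriv ?_
      simp only [hBdef, hsq0]
      field_simp
      ring
    set B' : ℝ := c * (U / ‖v‖ - I ^ 2 / ‖v‖ ^ 3) with hB'def
    have hB : HasDerivAt B B' 0 := by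
      have h1 : HasDerivAt (fun s : ℝ => c * (I + s * U)) (c * U) 0 := by
        have : HasDerivAt (fun s : ℝ => I + s * U) U 0 := by
          simpa using ((hasDerivAt_id (0:ℝ)).mul_const U).const_add I
        simpa using this.const_mul c
      have h2 : HasDerivAt (fun s : ℝ => (Real.sqrt (q s))⁻¹)
          (-(I / ‖v‖) / (Real.sqrt (q 0)) ^ 2) 0 := by
        have : Real.sqrt (q 0) ≠ 0 := by rw [hsq0]; exact hv0.ne'
        exact hsq'.inv this
      have hmul := h1.mul h2
      have : HasDerivAt (fun s : ℝ => c * (I + s * U) * (Real.sqrt (q s))⁻¹ - α u)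
          (c * U * (Real.sqrt (q 0))⁻¹ +
            c * (I + 0 * U) * (-(I / ‖v‖) / (Real.sqrt (q 0)) ^ 2)) 0 :=
        hmul.sub_const (α u)
      have heq : B = fun s : ℝ => c * (I + s * U) * (Real.sqrt (q s))⁻¹ - α u := by
        funext s; simp [hBdef, div_eq_mul_inv]
      rw [heq]
      refine this.congr_deriv ?_
      rw [hsq0, hB'def]
      field_simp
      ring
    refine ⟨B 0 * B 0 + A 0 * B', hA.mul hB, ?_⟩
    -- values at 0
    have hA0 : A 0 = c * ‖v‖ - α v := by simp [hAdef, hsq0]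
    have hB0 : B 0 = c * I / ‖v‖ - α u := by simp [hBdef, hsq0]
    have hApos : 0 < A 0 := by
      rw [hA0]
      have h1 : α v ≤ ‖α‖ * ‖v‖ := by
        have := α.le_opNorm v
        have h2 : |α v| ≤ ‖α‖ * ‖v‖ := by simpa using this
        linarith [le_abs_self (α v)]
      have : ‖α‖ * ‖v‖ < c * ‖v‖ := by
        apply mul_lt_mul_of_pos_right hα hv0
      linarith
    have hCS : I ^ 2 ≤ ‖v‖ ^ 2 * U := by
      have := real_inner_mul_inner_self_le v u
      rw [real_inner_self_eq_norm_sq, real_inner_self_eq_norm_sq] at this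
      simpa [hIdef, hUdef, sq] using this
    rcases lt_or_eq_of_le hCS with hlt | heqCS
    · -- strict Cauchy-Schwarz: second term positive, first nonneg
      have hterm2 : 0 < A 0 * B' := by
        apply mul_pos hApos
        rw [hB'def]
        apply mul_pos hc0
        rw [sub_pos, div_lt_div_iff₀ (by positivity) hv0]
        have : ‖v‖ ^ 3 = ‖v‖ ^ 2 * ‖v‖ := by ring
        calc I ^ 2 * ‖v‖ < ‖v‖ ^ 2 * U * ‖v‖ := by
              exact mul_lt_mul_of_pos_right hlt hv0
          _ = U * ‖v‖ ^ 3 := by ring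
      linarith [mul_self_nonneg (B 0)]
    · -- equality: u = r • v, so B 0 ≠ 0
      have habs : ‖⟪v, u⟫_ℝ‖ = ‖v‖ * ‖u‖ := by
        rw [Real.norm_eq_abs, ← hIdef, ← Real.sqrt_sq_eq_abs,
          ← Real.sqrt_sq (by positivity : (0:ℝ) ≤ ‖v‖ * ‖u‖)]
        congr 1
        rw [heqCS, hUdef]; ring
      obtain ⟨r, hr, hru⟩ := (norm_inner_eq_norm_iff hv hu).mp habs
      have hI : I = r * ‖v‖ ^ 2 := by
        rw [hIdef, hru, real_inner_smul_right, real_inner_self_eq_norm_sq]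
      have hαu : α u = r * α v := by rw [hru]; simp
      have hB0v : B 0 = r * (c * ‖v‖ - α v) := by
        rw [hB0, hI, hαu]
        field_simp
      have hB0ne : B 0 ≠ 0 := by
        rw [hB0v]
        exact mul_ne_zero hr (by rw [hA0] at hApos; linarith)
      have hB'nn : 0 ≤ B' := by
        rw [hB'def]
        apply mul_nonneg hc0.le
        rw [sub_nonneg, div_le_div_iff₀ (by positivity) hv0]
        calc I ^ 2 * ‖v‖ ≤ ‖v‖ ^ 2 * U * ‖v‖ := by
              exact mul_le_mul_of_nonneg_right hCS hv0.le
          _ = U * ‖v‖ ^ 3 := by ring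
      have h1 : 0 < B 0 * B 0 := mul_self_pos.mpr hB0ne
      have h2 : 0 ≤ A 0 * B' := mul_nonneg hApos.le hB'nn
      linarith
end

section
/- Let H be a real Hilbert space, let α : H → H* be a continuously differentiable (C¹) map into the topological dual of H, let T > 0, and let γ, η : ℝ → H be twice continuously differentiable curves with η(0) = 0 and η(T) = 0. Define the action A : ℝ → ℝ by A(s) = ∫₀ᵀ ( ½‖γ'(t) + s·η'(t)‖² − α(γ(t) + s·η(t))(γ'(t) + s·η'(t)) ) dt. Then A is differentiable at s = 0 with A'(0) = ∫₀ᵀ ( −⟨γ''(t), η(t)⟩ + (Dα(γ(t))[γ'(t)])(η(t)) − (Dα(γ(t))[η(t)])(γ'(t)) ) dt, where Dα(x)[u] ∈ H* denotes the Fréchet derivative of α at x applied to u. -/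
open intervalIntegral MeasureTheory Metric Set

/-- first variation of the magnetic action in a flat chart:
for a C¹ one-form `α : H → H*`, C² curves `γ, η` with `η(0) = η(T) = 0`, the action
`A(s) = ∫₀ᵀ (½‖γ' + sη'‖² − α(γ + sη)(γ' + sη'))` is differentiable at `s = 0` with
`A'(0) = ∫₀ᵀ (−⟪γ'', η⟫ + (Dα(γ)[γ'])(η) − (Dα(γ)[η])(γ'))`. -/
theorem stmt_15 {H : Type*} [NormedAddCommGroup H] [InnerProductSpace ℝ H] [CompleteSpace H]
    (α : H → (H →L[ℝ] ℝ)) (hα : ContDiff ℝ 1 α)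
    (T : ℝ) (hT : 0 < T)
    (γ η : ℝ → H) (hγ : ContDiff ℝ 2 γ) (hη : ContDiff ℝ 2 η)
    (hη0 : η 0 = 0) (hηT : η T = 0)
    (A : ℝ → ℝ)
    (hA : ∀ s : ℝ, A s = ∫ t in (0:ℝ)..T,
      ((1 / 2) * ‖deriv γ t + s • deriv η t‖ ^ 2 -
        α (γ t + s • η t) (deriv γ t + s • deriv η t))) :
    HasDerivAt A
      (∫ t in (0:ℝ)..T,
        (-(inner ℝ (deriv (deriv γ) t) (η t) : ℝ)
          + (fderiv ℝ α (γ t) (deriv γ t)) (η t)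
          - (fderiv ℝ α (γ t) (η t)) (deriv γ t))) 0 := by
  -- basic continuity facts
  have hγc : Continuous γ := hγ.continuous
  have hηc : Continuous η := hη.continuous
  have hγ'c : Continuous (deriv γ) := hγ.continuous_deriv (by norm_num)
  have hη'c : Continuous (deriv η) := hη.continuous_deriv (by norm_num)
  have hγ2 : ContDiff ℝ 1 (deriv γ) := by
    have := (contDiff_succ_iff_deriv (n := 1)).mp (by exact_mod_cast hγ)
    exact this.2.2
  have hγ''c : Continuous (deriv (deriv γ)) := hγ2.continuous_deriv le_rfl
  have hαc : Continuous α := hα.continuous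
  have hα'c : Continuous (fderiv ℝ α) := hα.continuous_fderiv one_ne_zero
  have hαd : Differentiable ℝ α := hα.differentiable one_ne_zero
  have hγd : Differentiable ℝ γ := hγ.differentiable (by norm_num)
  have hηd : Differentiable ℝ η := hη.differentiable (by norm_num)
  -- the integrand and its s-derivative
  set F : ℝ → ℝ → ℝ := fun s t =>
    (1 / 2) * ‖deriv γ t + s • deriv η t‖ ^ 2 -
      α (γ t + s • η t) (deriv γ t + s • deriv η t) with hF
  set F' : ℝ → ℝ → ℝ := fun s t =>
    (inner ℝ (deriv γ t + s • deriv η t) (deriv η t) : ℝ) -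
      ((fderiv ℝ α (γ t + s • η t) (η t)) (deriv γ t + s • deriv η t)
        + α (γ t + s • η t) (deriv η t)) with hF'
  -- joint continuity of F'
  have hF'cont : Continuous fun p : ℝ × ℝ => F' p.1 p.2 := by
    have h1 : Continuous fun p : ℝ × ℝ => deriv γ p.2 + p.1 • deriv η p.2 :=
      (hγ'c.comp continuous_snd).add (continuous_fst.smul (hη'c.comp continuous_snd))
    have h2 : Continuous fun p : ℝ × ℝ => γ p.2 + p.1 • η p.2 :=
      (hγc.comp continuous_snd).add (continuous_fst.smul (hηc.comp continuous_snd))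
    exact (h1.inner (hη'c.comp continuous_snd)).sub
      ((((hα'c.comp h2).clm_apply (hηc.comp continuous_snd)).clm_apply h1).add
        ((hαc.comp h2).clm_apply (hη'c.comp continuous_snd)))
  -- pointwise derivative in s
  have hderiv : ∀ (t : ℝ) (s : ℝ), HasDerivAt (fun s => F s t) (F' s t) s := by
    intro t s
    have hc : HasDerivAt (fun s : ℝ => γ t + s • η t) (η t) s := by
      simpa using ((hasDerivAt_id s).smul_const (η t)).const_add (γ t)
    have hd : HasDerivAt (fun s : ℝ => deriv γ t + s • deriv η t) (deriv η t) s := by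
      simpa using ((hasDerivAt_id s).smul_const (deriv η t)).const_add (deriv γ t)
    have h1 : HasDerivAt (fun s : ℝ => (1 / 2) * ‖deriv γ t + s • deriv η t‖ ^ 2)
        ((inner ℝ (deriv γ t + s • deriv η t) (deriv η t) : ℝ)) s := by
      have := (hd.inner ℝ hd).const_mul (1 / 2 : ℝ)
      have heq : (fun s : ℝ => (1 / 2) * (inner ℝ (deriv γ t + s • deriv η t)
          (deriv γ t + s • deriv η t) : ℝ)) =
          fun s : ℝ => (1 / 2) * ‖deriv γ t + s • deriv η t‖ ^ 2 := by
        funext u; rw [real_inner_self_eq_norm_sq]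
      rw [heq] at this
      refine this.congr_deriv ?_
      rw [real_inner_comm]; ring
    have h2 : HasDerivAt (fun s : ℝ => α (γ t + s • η t) (deriv γ t + s • deriv η t))
        ((fderiv ℝ α (γ t + s • η t) (η t)) (deriv γ t + s • deriv η t)
          + α (γ t + s • η t) (deriv η t)) s := by
      have hcomp : HasDerivAt (fun s : ℝ => α (γ t + s • η t))
          ((fderiv ℝ α (γ t + s • η t)) (η t)) s :=
        (hαd (γ t + s • η t)).hasFDerivAt.comp_hasDerivAt s hc
      exact hcomp.clm_apply hd
    exact h1.sub h2
  -- bound on a compact set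
  obtain ⟨C, hC⟩ := (isCompact_Icc.prod isCompact_Icc :
      IsCompact ((Icc (-1 : ℝ) 1) ×ˢ (Icc (0 : ℝ) T))).exists_bound_of_continuousOn
    hF'cont.continuousOn
  -- differentiate under the integral sign
  have key := intervalIntegral.hasDerivAt_integral_of_dominated_loc_of_deriv_le
    (F := F) (F' := F') (x₀ := (0 : ℝ)) (a := 0) (b := T) (μ := volume)
    (bound := fun _ => C) (s := ball (0 : ℝ) 1) (ball_mem_nhds (0 : ℝ) one_pos)
    (Filter.Eventually.of_forall fun s => by
      have : Continuous (F s) := by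
        have h1 : Continuous fun t => deriv γ t + s • deriv η t := hγ'c.add (hη'c.const_smul s)
        have h2 : Continuous fun t => γ t + s • η t := hγc.add (hηc.const_smul s)
        exact ((continuous_const.mul (h1.norm.pow 2)).sub ((hαc.comp h2).clm_apply h1))
      exact this.aestronglyMeasurable)
    (by
      have : Continuous (F 0) := by
        have h1 : Continuous fun t => deriv γ t + (0:ℝ) • deriv η t := hγ'c.add (hη'c.const_smul _)
        have h2 : Continuous fun t => γ t + (0:ℝ) • η t := hγc.add (hηc.const_smul _)
        exact ((continuous_const.mul (h1.norm.pow 2)).sub ((hαc.comp h2).clm_apply h1))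
      exact this.intervalIntegrable 0 T)
    ((hF'cont.comp (continuous_const.prodMk continuous_id)).aestronglyMeasurable)
    (Filter.Eventually.of_forall fun t ht x hx => by
      have ht' : t ∈ Icc (0 : ℝ) T := by
        rw [Set.uIoc_of_le hT.le] at ht; exact ⟨ht.1.le, ht.2⟩
      have hx' : x ∈ Icc (-1 : ℝ) 1 := by
        rw [mem_ball, dist_zero_right, Real.norm_eq_abs] at hx
        have := abs_lt.mp hx
        exact ⟨this.1.le, this.2.le⟩
      exact hC (x, t) ⟨hx', ht'⟩)
    (intervalIntegrable_const)
    (Filter.Eventually.of_forall fun t ht x hx => hderiv t x)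
  -- rewrite A as the parametric integral
  have hAeq : A = fun s => ∫ t in (0:ℝ)..T, F s t := funext hA
  rw [hAeq]
  -- now identify the two integrals
  refine key.2.congr_deriv (Eq.symm ?_)
  -- ∫ target = ∫ F' 0
  set G : ℝ → ℝ := fun t => (inner ℝ (deriv γ t) (η t) : ℝ) - α (γ t) (η t) with hG
  set G' : ℝ → ℝ := fun t =>
    ((inner ℝ (deriv γ t) (deriv η t) : ℝ) + (inner ℝ (deriv (deriv γ) t) (η t) : ℝ)) -
      ((fderiv ℝ α (γ t) (deriv γ t)) (η t) + α (γ t) (deriv η t)) with hG'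
  have hGd : ∀ t, HasDerivAt G (G' t) t := by
    intro t
    have h1 : HasDerivAt (fun t => (inner ℝ (deriv γ t) (η t) : ℝ))
        ((inner ℝ (deriv γ t) (deriv η t) : ℝ) + (inner ℝ (deriv (deriv γ) t) (η t) : ℝ)) t :=
      ((hγ2.differentiable one_ne_zero t).hasDerivAt).inner ℝ ((hηd t).hasDerivAt)
    have h2 : HasDerivAt (fun t => α (γ t) (η t))
        ((fderiv ℝ α (γ t)) (deriv γ t) (η t) + α (γ t) (deriv η t)) t := by
      have hcomp : HasDerivAt (fun t => α (γ t)) ((fderiv ℝ α (γ t)) (deriv γ t)) t :=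
        (hαd (γ t)).hasFDerivAt.comp_hasDerivAt t (hγd t).hasDerivAt
      exact hcomp.clm_apply (hηd t).hasDerivAt
    exact h1.sub h2
  have hG'cont : Continuous G' := by
    exact ((hγ'c.inner hη'c).add (hγ''c.inner hηc)).sub
      (((hα'c.comp hγc).clm_apply hγ'c).clm_apply hηc |>.add ((hαc.comp hγc).clm_apply hη'c))
  have hintG' : (∫ t in (0:ℝ)..T, G' t) = 0 := by
    rw [intervalIntegral.integral_eq_sub_of_hasDerivAt (fun t _ => hGd t)
      (hG'cont.intervalIntegrable 0 T)]
    simp [hG, hη0, hηT]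
  -- target integrand plus G' equals F' 0
  set tgt : ℝ → ℝ := fun t =>
    (-(inner ℝ (deriv (deriv γ) t) (η t) : ℝ)
      + (fderiv ℝ α (γ t) (deriv γ t)) (η t)
      - (fderiv ℝ α (γ t) (η t)) (deriv γ t)) with htgt
  have htgtcont : Continuous tgt := by
    exact (((hγ''c.inner hηc).neg.add
      (((hα'c.comp hγc).clm_apply hγ'c).clm_apply hηc)).sub
      (((hα'c.comp hγc).clm_apply hηc).clm_apply hγ'c))
  have hkey : ∀ t, F' 0 t = tgt t + G' t := by
    intro t
    simp only [hF', htgt, hG', zero_smul, add_zero]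
    ring
  calc (∫ t in (0:ℝ)..T, tgt t)
      = (∫ t in (0:ℝ)..T, tgt t) + (∫ t in (0:ℝ)..T, G' t) := by rw [hintG', add_zero]
    _ = ∫ t in (0:ℝ)..T, (tgt t + G' t) := (intervalIntegral.integral_add
          (htgtcont.intervalIntegrable 0 T) (hG'cont.intervalIntegrable 0 T)).symm
    _ = ∫ t in (0:ℝ)..T, F' 0 t := by
          apply intervalIntegral.integral_congr; intro t _; exact (hkey t).symm
end

section
/- Let H be a real Hilbert space, let α : H → H* be a continuously differentiable (C¹) map into the topological dual of H, let T > 0, and let γ : ℝ → H be a twice continuously differentiable curve. For a twice continuously differentiable variation η : ℝ → H with η(0) = 0 and η(T) = 0, let A_η(s) = ∫₀ᵀ ( ½‖γ'(t) + s·η'(t)‖² − α(γ(t) + s·η(t))(γ'(t) + s·η'(t)) ) dt. Then the following are equivalent: (i) for every such η, A_η'(0) = 0 (γ is a critical point of the magnetic action with fixed endpoints); (ii) for every t ∈ [0, T] and every w ∈ H, ⟨γ''(t), w⟩ = (Dα(γ(t))[γ'(t)])(w) − (Dα(γ(t))[w])(γ'(t)) (γ satisfies the magnetic geodesic equation γ''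 = Y_γ γ', where Y is the Lorentz force of the exact magnetic form dα). -/
open MeasureTheory intervalIntegral Metric Set

lemma stmt16_master {H : Type*} [NormedAddCommGroup H] [InnerProductSpace ℝ H] [CompleteSpace H]
    (α : H → (H →L[ℝ] ℝ)) (hα : ContDiff ℝ 1 α)
    (T : ℝ) (hT : 0 < T)
    (γ : ℝ → H) (hγ : ContDiff ℝ 2 γ)
    (η : ℝ → H) (hη : ContDiff ℝ 2 η) (hη0 : η 0 = 0) (hηT : η T = 0) :
    HasDerivAt (fun s : ℝ => ∫ t in (0:ℝ)..T,
        ((1 / 2) * ‖deriv γ t + s • deriv η t‖ ^ 2 -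
          α (γ t + s • η t) (deriv γ t + s • deriv η t)))
      (∫ t in (0:ℝ)..T,
        ((fderiv ℝ α (γ t) (deriv γ t)) (η t) - (fderiv ℝ α (γ t) (η t)) (deriv γ t)
          - (inner ℝ (deriv (deriv γ) t) (η t) : ℝ))) 0 := by
  have h21 : ((2 : ℕ) : WithTop ℕ∞) = 1 + 1 := by norm_num
  have hγd : Differentiable ℝ γ := hγ.differentiable two_ne_zero
  have hγ1 : ContDiff ℝ 1 (deriv γ) := (contDiff_succ_iff_deriv.mp (h21 ▸ hγ)).2.2
  have cγ' : Continuous (deriv γ) := hγ1.continuous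
  have hγ'd : Differentiable ℝ (deriv γ) := hγ1.differentiable one_ne_zero
  have cγ'' : Continuous (deriv (deriv γ)) := (contDiff_one_iff_deriv.mp hγ1).2
  have hηd : Differentiable ℝ η := hη.differentiable two_ne_zero
  have hη1 : ContDiff ℝ 1 (deriv η) := (contDiff_succ_iff_deriv.mp (h21 ▸ hη)).2.2
  have cη' : Continuous (deriv η) := hη1.continuous
  have hαd : Differentiable ℝ α := hα.differentiable one_ne_zero
  have cα : Continuous α := hα.continuous
  have cDα : Continuous (fderiv ℝ α) := (contDiff_one_iff_fderiv.mp hα).2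
  -- the pointwise derivative in the parameter s
  set F' : ℝ → ℝ → ℝ := fun x t =>
    (inner ℝ (deriv γ t + x • deriv η t) (deriv η t) : ℝ)
      - ((fderiv ℝ α (γ t + x • η t) (η t)) (deriv γ t + x • deriv η t)
          + α (γ t + x • η t) (deriv η t)) with hF'def
  have hdiff : ∀ (t : ℝ) (x : ℝ), HasDerivAt (fun s : ℝ =>
      (1 / 2) * ‖deriv γ t + s • deriv η t‖ ^ 2 -
        α (γ t + s • η t) (deriv γ t + s • deriv η t)) (F' x t) x := by
    intro t x
    have hp : HasDerivAt (fun s : ℝ => γ t + s • η t) (η t) x := by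
      have h := (hasDerivAt_id x).smul_const (η t)
      rw [one_smul] at h
      exact h.const_add (γ t)
    have hv : HasDerivAt (fun s : ℝ => deriv γ t + s • deriv η t) (deriv η t) x := by
      have h := (hasDerivAt_id x).smul_const (deriv η t)
      rw [one_smul] at h
      exact h.const_add (deriv γ t)
    have hA : HasDerivAt (fun s : ℝ => α (γ t + s • η t))
        (fderiv ℝ α (γ t + x • η t) (η t)) x :=
      (hαd _).hasFDerivAt.comp_hasDerivAt x hp
    have h2 := hA.clm_apply hv
    have h1 : HasDerivAt (fun s : ℝ => (1 / 2) * ‖deriv γ t + s • deriv η t‖ ^ 2)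
        ((inner ℝ (deriv γ t + x • deriv η t) (deriv η t) : ℝ)) x := by
      have hinner := HasDerivAt.const_mul (1 / 2 : ℝ) (hv.inner ℝ hv)
      simp only [real_inner_self_eq_norm_sq] at hinner
      refine hinner.congr_deriv ?_
      rw [real_inner_comm (deriv η t) (deriv γ t + x • deriv η t)]
      ring
    exact h1.sub h2
  -- continuity of F' jointly
  have cv : Continuous (fun p : ℝ × ℝ => deriv γ p.2 + p.1 • deriv η p.2) :=
    (cγ'.comp continuous_snd).add (continuous_fst.smul (cη'.comp continuous_snd))
  have cp : Continuous (fun p : ℝ × ℝ => γ p.2 + p.1 • η p.2) :=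
    (hγ.continuous.comp continuous_snd).add (continuous_fst.smul (hη.continuous.comp continuous_snd))
  have cΦ : Continuous (fun p : ℝ × ℝ => F' p.1 p.2) := by
    apply Continuous.sub
    · exact cv.inner (cη'.comp continuous_snd)
    · exact (((cDα.comp cp).clm_apply (hη.continuous.comp continuous_snd)).clm_apply cv).add
        ((cα.comp cp).clm_apply (cη'.comp continuous_snd))
  obtain ⟨C, hC⟩ :=
    ((isCompact_Icc (a := (-1:ℝ)) (b := 1)).prod (isCompact_Icc (a := (0:ℝ)) (b := T))).exists_bound_of_continuousOn cΦ.continuousOn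
  have cF : ∀ x : ℝ, Continuous (fun t =>
      (1 / 2) * ‖deriv γ t + x • deriv η t‖ ^ 2 -
        α (γ t + x • η t) (deriv γ t + x • deriv η t)) := by
    intro x
    have cvx : Continuous (fun t => deriv γ t + x • deriv η t) := cγ'.add (cη'.const_smul x)
    have cpx : Continuous (fun t => γ t + x • η t) := hγ.continuous.add (hη.continuous.const_smul x)
    exact (continuous_const.mul ((cvx.norm).pow 2)).sub ((cα.comp cpx).clm_apply cvx)
  have cF'0 : Continuous (F' 0) := by
    have : (F' 0) = (fun t => F' ((0:ℝ), t).1 ((0:ℝ), t).2) := rfl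
    rw [this]
    exact cΦ.comp (continuous_const.prodMk continuous_id)
  have main := intervalIntegral.hasDerivAt_integral_of_dominated_loc_of_deriv_le
      (μ := volume) (F := fun x t =>
        (1 / 2) * ‖deriv γ t + x • deriv η t‖ ^ 2 -
          α (γ t + x • η t) (deriv γ t + x • deriv η t))
      (F' := F') (x₀ := (0:ℝ)) (bound := fun _ => C) (a := 0) (b := T) (s := ball 0 1) (ball_mem_nhds 0 one_pos)
      (Filter.Eventually.of_forall fun x => ((cF x).aestronglyMeasurable))
      ((cF 0).intervalIntegrable 0 T)
      (cF'0.aestronglyMeasurable)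
      (Filter.Eventually.of_forall fun t ht x hx => by
        have hx' : x ∈ Icc (-1:ℝ) 1 := by
          rw [mem_ball, Real.dist_eq, sub_zero] at hx
          exact abs_le.mp hx.le
        have ht' : t ∈ Icc (0:ℝ) T := by
          rw [Set.uIoc_of_le hT.le] at ht
          exact Ioc_subset_Icc_self ht
        exact hC (x, t) (Set.mk_mem_prod hx' ht'))
      (intervalIntegrable_const)
      (Filter.Eventually.of_forall fun t ht x hx => hdiff t x)
  -- now rewrite the value of the derivative
  have hBder : ∀ t : ℝ, HasDerivAt (fun u => (inner ℝ (deriv γ u) (η u) : ℝ) - α (γ u) (η u))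
      (((inner ℝ (deriv γ t) (deriv η t) : ℝ) + (inner ℝ (deriv (deriv γ) t) (η t) : ℝ))
        - ((fderiv ℝ α (γ t) (deriv γ t)) (η t) + α (γ t) (deriv η t))) t := by
    intro t
    exact ((hγ'd t).hasDerivAt.inner ℝ (hηd t).hasDerivAt).sub
      (((hαd (γ t)).hasFDerivAt.comp_hasDerivAt t (hγd t).hasDerivAt).clm_apply
        (hηd t).hasDerivAt)
  have cB' : Continuous (fun t => ((inner ℝ (deriv γ t) (deriv η t) : ℝ)
      + (inner ℝ (deriv (deriv γ) t) (η t) : ℝ))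
      - ((fderiv ℝ α (γ t) (deriv γ t)) (η t) + α (γ t) (deriv η t))) := by
    apply Continuous.sub
    · exact (cγ'.inner cη').add (cγ''.inner hη.continuous)
    · exact (((cDα.comp hγ.continuous).clm_apply cγ').clm_apply hη.continuous).add
        ((cα.comp hγ.continuous).clm_apply cη')
  have hBint : ∫ t in (0:ℝ)..T, (((inner ℝ (deriv γ t) (deriv η t) : ℝ)
      + (inner ℝ (deriv (deriv γ) t) (η t) : ℝ))
      - ((fderiv ℝ α (γ t) (deriv γ t)) (η t) + α (γ t) (deriv η t))) = 0 := by
    rw [intervalIntegral.integral_eq_sub_of_hasDerivAt (fun t _ => hBder t)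
      (cB'.intervalIntegrable 0 T)]
    simp [hη0, hηT]
  have cG : Continuous (fun t => (fderiv ℝ α (γ t) (deriv γ t)) (η t)
      - (fderiv ℝ α (γ t) (η t)) (deriv γ t) - (inner ℝ (deriv (deriv γ) t) (η t) : ℝ)) := by
    apply Continuous.sub
    · exact (((cDα.comp hγ.continuous).clm_apply cγ').clm_apply hη.continuous).sub
        (((cDα.comp hγ.continuous).clm_apply hη.continuous).clm_apply cγ')
    · exact cγ''.inner hη.continuous
  have hval : ∫ t in (0:ℝ)..T, F' 0 t =
      ∫ t in (0:ℝ)..T,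
        ((fderiv ℝ α (γ t) (deriv γ t)) (η t) - (fderiv ℝ α (γ t) (η t)) (deriv γ t)
          - (inner ℝ (deriv (deriv γ) t) (η t) : ℝ)) := by
    have hsum : (fun t => F' 0 t) = fun t =>
        ((fderiv ℝ α (γ t) (deriv γ t)) (η t) - (fderiv ℝ α (γ t) (η t)) (deriv γ t)
          - (inner ℝ (deriv (deriv γ) t) (η t) : ℝ))
        + (((inner ℝ (deriv γ t) (deriv η t) : ℝ)
          + (inner ℝ (deriv (deriv γ) t) (η t) : ℝ))
          - ((fderiv ℝ α (γ t) (deriv γ t)) (η t) + α (γ t) (deriv η t))) := by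
      funext t
      simp only [hF'def, zero_smul, add_zero]
      ring
    rw [hsum, intervalIntegral.integral_add (cG.intervalIntegrable 0 T)
      (cB'.intervalIntegrable 0 T), hBint, add_zero]
  rw [hval] at main
  exact main.2

lemma stmt16_bump (g : ℝ → ℝ) (cg : Continuous g) (T : ℝ) (hT : 0 < T)
    (t₀ : ℝ) (ht₀ : t₀ ∈ Set.Ioo (0:ℝ) T) (hpos : 0 < g t₀)
    (hint : ∀ f : ContDiffBump t₀, f.rOut ≤ min t₀ (T - t₀) →
      ∫ t in (0:ℝ)..T, (f : ℝ → ℝ) t * g t = 0) : False := by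
  obtain ⟨δ₁, hδ₁pos, hδ₁⟩ := Metric.continuousAt_iff.mp (cg.continuousAt (x := t₀))
    (g t₀ / 2) (half_pos hpos)
  set δ : ℝ := min δ₁ (min t₀ (T - t₀)) with hδdef
  have hδpos : 0 < δ := lt_min hδ₁pos (lt_min ht₀.1 (by linarith [ht₀.2]))
  have hδt₀ : δ ≤ t₀ := le_trans (min_le_right _ _) (min_le_left _ _)
  have hδT : δ ≤ T - t₀ := le_trans (min_le_right _ _) (min_le_right _ _)
  have hδδ₁ : δ ≤ δ₁ := min_le_left _ _
  set f : ContDiffBump t₀ := ⟨δ / 2, δ, by positivity, by linarith⟩ with hfdef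
  have hglower : ∀ t : ℝ, dist t t₀ < δ → g t₀ / 2 < g t := by
    intro t ht
    have h' := hδ₁ (lt_of_lt_of_le ht hδδ₁)
    rw [Real.dist_eq] at h'
    have h'' := abs_lt.mp h'
    linarith [h''.1]
  have hzero := hint f (le_trans (le_of_eq rfl) (min_le_right δ₁ (min t₀ (T - t₀))))
  have hfg_nonneg : ∀ t : ℝ, 0 ≤ (f : ℝ → ℝ) t * g t := by
    intro t
    rcases lt_or_ge (dist t t₀) δ with h | h
    · exact mul_nonneg f.nonneg (by linarith [hglower t h, half_pos hpos])
    · rw [f.zero_of_le_dist h, zero_mul]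
  have hball_sub : Metric.closedBall t₀ (δ / 2) ⊆ Set.Ioc (0:ℝ) T := by
    intro t ht
    rw [Metric.mem_closedBall, Real.dist_eq] at ht
    have h'' := abs_le.mp ht
    constructor
    · linarith [h''.1]
    · linarith [h''.2]
  have hcont_fg : Continuous (fun t => (f : ℝ → ℝ) t * g t) := f.continuous.mul cg
  have hIntOn : MeasureTheory.IntegrableOn (fun t => (f : ℝ → ℝ) t * g t)
      (Set.Ioc 0 T) MeasureTheory.volume := (hcont_fg.intervalIntegrable 0 T).1
  have h1 : ∫ t in Metric.closedBall t₀ (δ / 2), (f : ℝ → ℝ) t * g t ≤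
      ∫ t in Set.Ioc (0:ℝ) T, (f : ℝ → ℝ) t * g t := by
    apply MeasureTheory.setIntegral_mono_set hIntOn
    · exact Filter.Eventually.of_forall hfg_nonneg
    · exact Filter.Eventually.of_forall hball_sub
  have h2 : g t₀ / 2 * (MeasureTheory.volume (Metric.closedBall t₀ (δ / 2))).toReal ≤
      ∫ t in Metric.closedBall t₀ (δ / 2), (f : ℝ → ℝ) t * g t := by
    rw [← MeasureTheory.measureReal_def, mul_comm, ← smul_eq_mul]
    apply MeasureTheory.setIntegral_ge_of_const_le measurableSet_closedBall
      measure_closedBall_lt_top.ne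
    · intro t ht
      have h1t : (f : ℝ → ℝ) t = 1 := f.one_of_mem_closedBall ht
      rw [h1t, one_mul]
      exact (hglower t (lt_of_le_of_lt (Metric.mem_closedBall.mp ht) (by linarith))).le
    · exact hcont_fg.continuousOn.integrableOn_compact (isCompact_closedBall _ _)
  have hvol : 0 < (MeasureTheory.volume (Metric.closedBall t₀ (δ / 2))).toReal := by
    rw [Real.volume_closedBall, ENNReal.toReal_ofReal (by linarith)]
    linarith
  have hlt : 0 < ∫ t in Set.Ioc (0:ℝ) T, (f : ℝ → ℝ) t * g t :=
    lt_of_lt_of_le (mul_pos (half_pos hpos) hvol) (le_trans h2 h1)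
  rw [intervalIntegral.integral_of_le hT.le] at hzero
  rw [hzero] at hlt
  exact lt_irrefl 0 hlt


/-- a C² curve `γ` is a critical point of the magnetic action with fixed
endpoints (for all C² variations `η` vanishing at `0` and `T`) if and only if it
satisfies the magnetic geodesic equation
`⟪γ''(t), w⟫ = (Dα(γ(t))[γ'(t)])(w) − (Dα(γ(t))[w])(γ'(t))` on `[0, T]`. -/
theorem stmt_16 {H : Type*} [NormedAddCommGroup H] [InnerProductSpace ℝ H] [CompleteSpace H]
    (α : H → (H →L[ℝ] ℝ)) (hα : ContDiff ℝ 1 α)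
    (T : ℝ) (hT : 0 < T)
    (γ : ℝ → H) (hγ : ContDiff ℝ 2 γ) :
    ((∀ η : ℝ → H, ContDiff ℝ 2 η → η 0 = 0 → η T = 0 →
        HasDerivAt (fun s : ℝ => ∫ t in (0:ℝ)..T,
          ((1 / 2) * ‖deriv γ t + s • deriv η t‖ ^ 2 -
            α (γ t + s • η t) (deriv γ t + s • deriv η t))) 0 0)
      ↔
      (∀ t ∈ Set.Icc (0:ℝ) T, ∀ w : H,
        (inner ℝ (deriv (deriv γ) t) w : ℝ) =
          (fderiv ℝ α (γ t) (deriv γ t)) w - (fderiv ℝ α (γ t) w) (deriv γ t))) := by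
  have h21 : ((2 : ℕ) : WithTop ℕ∞) = 1 + 1 := by norm_num
  have hγ1 : ContDiff ℝ 1 (deriv γ) := (contDiff_succ_iff_deriv.mp (h21 ▸ hγ)).2.2
  have cγ' : Continuous (deriv γ) := hγ1.continuous
  have cγ'' : Continuous (deriv (deriv γ)) := (contDiff_one_iff_deriv.mp hγ1).2
  have cDα : Continuous (fderiv ℝ α) := (contDiff_one_iff_fderiv.mp hα).2
  have cg : ∀ w : H, Continuous (fun t =>
      (fderiv ℝ α (γ t) (deriv γ t)) w - (fderiv ℝ α (γ t) w) (deriv γ t)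
        - (inner ℝ (deriv (deriv γ) t) w : ℝ)) := by
    intro w
    apply Continuous.sub
    · exact (((cDα.comp hγ.continuous).clm_apply cγ').clm_apply continuous_const).sub
        (((cDα.comp hγ.continuous).clm_apply continuous_const).clm_apply cγ')
    · exact cγ''.inner continuous_const
  constructor
  · -- critical point → geodesic equation
    intro hcrit
    have key : ∀ (w : H), ∀ t₀ ∈ Set.Ioo (0:ℝ) T,
        ¬ (0 < (fderiv ℝ α (γ t₀) (deriv γ t₀)) w - (fderiv ℝ α (γ t₀) w) (deriv γ t₀)
            - (inner ℝ (deriv (deriv γ) t₀) w : ℝ)) := by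
      intro w t₀ ht₀ hpos
      apply stmt16_bump (fun t =>
          (fderiv ℝ α (γ t) (deriv γ t)) w - (fderiv ℝ α (γ t) w) (deriv γ t)
            - (inner ℝ (deriv (deriv γ) t) w : ℝ)) (cg w) T hT t₀ ht₀ hpos
      intro f hf
      set η : ℝ → H := fun t => (f : ℝ → ℝ) t • w with hηdef
      have hηC : ContDiff ℝ 2 η := ContDiff.smul (f.contDiff (n := 2)) contDiff_const
      have hrOutt₀ : f.rOut ≤ t₀ := le_trans hf (min_le_left _ _)
      have hrOutT : f.rOut ≤ T - t₀ := le_trans hf (min_le_right _ _)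
      have hη0 : η 0 = 0 := by
        have hz : (f : ℝ → ℝ) 0 = 0 := f.zero_of_le_dist (by
          rw [Real.dist_eq, abs_sub_comm,
            abs_of_nonneg (by linarith [ht₀.1] : (0:ℝ) ≤ t₀ - 0)]
          simpa using hrOutt₀)
        simp [hηdef, hz]
      have hηT : η T = 0 := by
        have hz : (f : ℝ → ℝ) T = 0 := f.zero_of_le_dist (by
          rw [Real.dist_eq, abs_of_nonneg (by linarith [ht₀.2] : (0:ℝ) ≤ T - t₀)]
          linarith)
        simp [hηdef, hz]
      have hmaster := stmt16_master α hα T hT γ hγ η hηC hη0 hηT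
      have hzero := (hmaster.unique (hcrit η hηC hη0 hηT))
      have hcongr : (∫ t in (0:ℝ)..T, (f : ℝ → ℝ) t *
          ((fderiv ℝ α (γ t) (deriv γ t)) w - (fderiv ℝ α (γ t) w) (deriv γ t)
            - (inner ℝ (deriv (deriv γ) t) w : ℝ)))
          = ∫ t in (0:ℝ)..T,
            ((fderiv ℝ α (γ t) (deriv γ t)) (η t) - (fderiv ℝ α (γ t) (η t)) (deriv γ t)
              - (inner ℝ (deriv (deriv γ) t) (η t) : ℝ)) := by
        apply intervalIntegral.integral_congr
        intro t _
        simp only [hηdef]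
        simp only [real_inner_smul_right, _root_.map_smul,
          ContinuousLinearMap.smul_apply, smul_eq_mul]
        ring
      rw [hcongr, hzero]
    have hIoo : ∀ (w : H), ∀ t ∈ Set.Ioo (0:ℝ) T,
        (fderiv ℝ α (γ t) (deriv γ t)) w - (fderiv ℝ α (γ t) w) (deriv γ t)
          - (inner ℝ (deriv (deriv γ) t) w : ℝ) = 0 := by
      intro w t ht
      have h1 := not_lt.mp (key w t ht)
      have h2 := not_lt.mp (key (-w) t ht)
      simp only [map_neg, inner_neg_right, ContinuousLinearMap.neg_apply] at h2
      linarith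
    intro t ht w
    have hIcc : (fderiv ℝ α (γ t) (deriv γ t)) w - (fderiv ℝ α (γ t) w) (deriv γ t)
        - (inner ℝ (deriv (deriv γ) t) w : ℝ) = 0 := by
      have hsub : Set.Icc (0:ℝ) T ⊆ {t | (fderiv ℝ α (γ t) (deriv γ t)) w
          - (fderiv ℝ α (γ t) w) (deriv γ t) - (inner ℝ (deriv (deriv γ) t) w : ℝ) = 0} := by
        rw [← closure_Ioo hT.ne]
        apply closure_minimal
        · intro s hs; exact hIoo w s hs
        · exact isClosed_eq (cg w) continuous_const
      exact hsub ht
    linarith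
  · -- geodesic equation → critical point
    intro heq η hηC hη0 hηT
    have hmaster := stmt16_master α hα T hT γ hγ η hηC hη0 hηT
    have hzero : (∫ t in (0:ℝ)..T,
        ((fderiv ℝ α (γ t) (deriv γ t)) (η t) - (fderiv ℝ α (γ t) (η t)) (deriv γ t)
          - (inner ℝ (deriv (deriv γ) t) (η t) : ℝ))) = 0 := by
      have hEq : Set.EqOn (fun t =>
          ((fderiv ℝ α (γ t) (deriv γ t)) (η t) - (fderiv ℝ α (γ t) (η t)) (deriv γ t)
            - (inner ℝ (deriv (deriv γ) t) (η t) : ℝ))) (fun _ => (0:ℝ))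
          (Set.uIcc (0:ℝ) T) := by
        intro t ht
        rw [Set.uIcc_of_le hT.le] at ht
        have h' := heq t ht (η t)
        simp only
        linarith
      rw [intervalIntegral.integral_congr hEq, intervalIntegral.integral_zero]
    rw [hzero] at hmaster
    exact hmaster
end
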